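/- arXiv:2302.00232 — 3 statements merged into one kernel-verified Lean document; each statement's English description precedes it below -/
import Mathlib

section
/- Let n be a positive integer, V_u > 0 and V_u^b > 0 real numbers, A an n×n real matrix, g ∈ ℝ^n, and (e[t])_{t≥1} a bounded sequence of vectors in ℝ^n. Define the sequence β[t] ∈ ℝ^n by β[0] = 0 and β[t+1] = φ((1/V_u^b)·((t/(t+1))·(1/V_u)·A·β[t] + g)) − (1/V_u^b)·e[t+1]/(t+1) for all t ≥ 0. If there exists γ < 1 such that ‖A‖₂ ≤ γ·V_u·V_u^b, then the sequence β[t] converges to a limit β* ∈ ℝ^n, and this limit satisfies the fixed-point equation β* = φ((1/V_u^b)·((1/V_u)·A·β* + g)). -/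
open Filter Topology

/-- Euclidean norm of a vector in `ℝ^n`. -/
noncomputable def l2norm {n : ℕ} (x : Fin n → ℝ) : ℝ := Real.sqrt (∑ i, (x i) ^ 2)

/-- Operator norm of a matrix with respect to Euclidean norms, `‖A‖₂`. -/
noncomputable def l2OpNorm {m n : ℕ} (A : Matrix (Fin m) (Fin n) ℝ) : ℝ :=
  sInf {c : ℝ | 0 ≤ c ∧ ∀ x : Fin n → ℝ, l2norm (A.mulVec x) ≤ c * l2norm x}

/-- Coordinatewise clamp `φ(x)_i = min(1, max(−1, x_i))`. -/
noncomputable def clamp1 {n : ℕ} (x : Fin n → ℝ) : Fin n → ℝ := fun i => min 1 (max (-1) (x i))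

noncomputable def toE {n : ℕ} (x : Fin n → ℝ) : EuclideanSpace ℝ (Fin n) := WithLp.toLp 2 x

lemma toE_sub {n : ℕ} (x y : Fin n → ℝ) : toE (x - y) = toE x - toE y := rfl
lemma toE_add {n : ℕ} (x y : Fin n → ℝ) : toE (x + y) = toE x + toE y := rfl
lemma toE_smul {n : ℕ} (c : ℝ) (x : Fin n → ℝ) : toE (c • x) = c • toE x := rfl

lemma l2norm_eq_norm {n : ℕ} (x : Fin n → ℝ) : l2norm x = ‖toE x‖ := by
  rw [EuclideanSpace.norm_eq, l2norm]
  congr 1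
  refine Finset.sum_congr rfl fun i _ => ?_
  rw [Real.norm_eq_abs, sq_abs]
  rfl

lemma l2norm_nonneg' {n : ℕ} (x : Fin n → ℝ) : 0 ≤ l2norm x := Real.sqrt_nonneg _

lemma l2norm_add_le {n : ℕ} (x y : Fin n → ℝ) : l2norm (x + y) ≤ l2norm x + l2norm y := by
  rw [l2norm_eq_norm, l2norm_eq_norm, l2norm_eq_norm, toE_add]
  exact norm_add_le _ _

lemma l2norm_sub_le {n : ℕ} (x y : Fin n → ℝ) : l2norm (x - y) ≤ l2norm x + l2norm y := by
  rw [l2norm_eq_norm, l2norm_eq_norm, l2norm_eq_norm, toE_sub]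
  exact norm_sub_le _ _

lemma l2norm_smul {n : ℕ} (c : ℝ) (x : Fin n → ℝ) : l2norm (c • x) = |c| * l2norm x := by
  rw [l2norm_eq_norm, l2norm_eq_norm, toE_smul, norm_smul, Real.norm_eq_abs]

lemma dist_toE {n : ℕ} (x y : Fin n → ℝ) : dist (toE x) (toE y) = l2norm (x - y) := by
  rw [dist_eq_norm, l2norm_eq_norm, toE_sub]

lemma clamp1_lip {n : ℕ} (x y : Fin n → ℝ) :
    l2norm (clamp1 x - clamp1 y) ≤ l2norm (x - y) := by
  rw [l2norm, l2norm]
  apply Real.sqrt_le_sqrt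
  apply Finset.sum_le_sum
  intro i _
  have h1 : |clamp1 x i - clamp1 y i| ≤ |x i - y i| := by
    refine (abs_min_sub_min_le_max 1 (max (-1) (x i)) 1 (max (-1) (y i))).trans ?_
    refine max_le (by simp) ?_
    refine (abs_max_sub_max_le_max (-1) (x i) (-1) (y i)).trans ?_
    exact max_le (by simp [abs_nonneg]) le_rfl
  rw [Pi.sub_apply, Pi.sub_apply, ← sq_abs (clamp1 x i - clamp1 y i), ← sq_abs (x i - y i)]
  exact pow_le_pow_left₀ (abs_nonneg _) h1 2

lemma l2OpNorm_set_nonempty {n : ℕ} (A : Matrix (Fin n) (Fin n) ℝ) :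
    {c : ℝ | 0 ≤ c ∧ ∀ x : Fin n → ℝ, l2norm (A.mulVec x) ≤ c * l2norm x}.Nonempty := by
  classical
  let T : EuclideanSpace ℝ (Fin n) →L[ℝ] EuclideanSpace ℝ (Fin n) :=
    LinearMap.toContinuousLinearMap
      ((WithLp.linearEquiv 2 ℝ (Fin n → ℝ)).symm.toLinearMap ∘ₗ A.mulVecLin ∘ₗ
        (WithLp.linearEquiv 2 ℝ (Fin n → ℝ)).toLinearMap)
  refine ⟨‖T‖, norm_nonneg _, fun y => ?_⟩
  have hTy : T (toE y) = toE (A.mulVec y) := rfl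
  calc l2norm (A.mulVec y) = ‖T (toE y)‖ := by rw [hTy, l2norm_eq_norm]
    _ ≤ ‖T‖ * ‖toE y‖ := T.le_opNorm (toE y)
    _ = ‖T‖ * l2norm y := by rw [l2norm_eq_norm]

lemma l2OpNorm_bound {n : ℕ} (A : Matrix (Fin n) (Fin n) ℝ) (x : Fin n → ℝ) :
    l2norm (A.mulVec x) ≤ l2OpNorm A * l2norm x := by
  have hSne := l2OpNorm_set_nonempty A
  rcases eq_or_ne (l2norm x) 0 with h0 | h0
  · have hx : x = 0 := by
      have h := l2norm_eq_norm x
      rw [h0] at h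
      have : toE x = 0 := norm_eq_zero.mp h.symm
      exact congrArg WithLp.ofLp this
    simp [hx, Matrix.mulVec_zero, h0, l2norm]
  · have hxpos : 0 < l2norm x := lt_of_le_of_ne (l2norm_nonneg' x) (Ne.symm h0)
    have hle : l2norm (A.mulVec x) / l2norm x ≤ l2OpNorm A := by
      refine le_csInf hSne fun c hc => ?_
      exact (div_le_iff₀ hxpos).2 (hc.2 x)
    calc l2norm (A.mulVec x) = (l2norm (A.mulVec x) / l2norm x) * l2norm x := by field_simp
      _ ≤ l2OpNorm A * l2norm x := mul_le_mul_of_nonneg_right hle hxpos.le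

lemma decay_lemma (q : ℝ) (hq0 : 0 ≤ q) (hq1 : q < 1) (d u : ℕ → ℝ)
    (hd : ∀ t, 0 ≤ d t) (hrec : ∀ t, d (t + 1) ≤ q * d t + u t)
    (hu : Tendsto u atTop (𝓝 0)) :
    Tendsto d atTop (𝓝 0) := by
  rw [Metric.tendsto_atTop]
  intro ε hε
  have hε2 : 0 < (1 - q) * (ε / 2) := mul_pos (by linarith) (by linarith)
  obtain ⟨T, hT⟩ := (Metric.tendsto_atTop.1 hu) ((1 - q) * (ε / 2)) hε2
  have hub : ∀ t, T ≤ t → u t ≤ (1 - q) * (ε / 2) := by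
    intro t ht
    have h := hT t ht
    rw [Real.dist_eq, sub_zero] at h
    exact (abs_le.1 h.le).2
  have key : ∀ k, d (T + k) ≤ q ^ k * d T + ε / 2 := by
    intro k
    induction k with
    | zero => simpa using by linarith [hd T, hε]
    | succ k ih =>
      have h1 := hrec (T + k)
      have h2 := hub (T + k) (Nat.le_add_right _ _)
      have h3 : q * d (T + k) ≤ q * (q ^ k * d T + ε / 2) :=
        mul_le_mul_of_nonneg_left ih hq0
      have heq : T + (k + 1) = T + k + 1 := by omega
      rw [heq]
      calc d (T + k + 1) ≤ q * d (T + k) + u (T + k) := h1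
        _ ≤ q * (q ^ k * d T + ε / 2) + (1 - q) * (ε / 2) := by linarith
        _ = q ^ (k + 1) * d T + ε / 2 := by ring
  have hpow : Tendsto (fun k : ℕ => q ^ k * d T) atTop (𝓝 0) := by
    simpa using (tendsto_pow_atTop_nhds_zero_of_lt_one hq0 hq1).mul_const (d T)
  obtain ⟨K, hK⟩ := (Metric.tendsto_atTop.1 hpow) (ε / 2) (by linarith)
  refine ⟨T + K, fun t ht => ?_⟩
  have hTt : T ≤ t := le_trans (Nat.le_add_right T K) ht
  have h1 : d t ≤ q ^ (t - T) * d T + ε / 2 := by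
    have h := key (t - T)
    rwa [Nat.add_sub_cancel' hTt] at h
  have h2 : q ^ (t - T) * d T < ε / 2 := by
    have h := hK (t - T) (by omega)
    rwa [Real.dist_eq, sub_zero, abs_of_nonneg (mul_nonneg (pow_nonneg hq0 _) (hd T))] at h
  rw [Real.dist_eq, sub_zero, abs_of_nonneg (hd t)]
  linarith

theorem stmt0 (n : ℕ) (hn : 0 < n) (Vu Vub : ℝ) (hVu : 0 < Vu) (hVub : 0 < Vub)
    (A : Matrix (Fin n) (Fin n) ℝ) (g : Fin n → ℝ) (e : ℕ → Fin n → ℝ)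
    (he : ∃ C : ℝ, ∀ t : ℕ, 1 ≤ t → l2norm (e t) ≤ C)
    (β : ℕ → Fin n → ℝ) (hβ0 : β 0 = 0)
    (hβ : ∀ t : ℕ, β (t + 1) =
      clamp1 ((1 / Vub) • (((t : ℝ) / ((t : ℝ) + 1)) • ((1 / Vu) • A.mulVec (β t)) + g))
        - (1 / Vub) • ((1 / ((t : ℝ) + 1)) • e (t + 1)))
    (hA : ∃ γ : ℝ, γ < 1 ∧ l2OpNorm A ≤ γ * Vu * Vub) :
    ∃ βstar : Fin n → ℝ, Tendsto β atTop (𝓝 βstar) ∧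
      βstar = clamp1 ((1 / Vub) • ((1 / Vu) • A.mulVec βstar + g)) := by
  classical
  obtain ⟨γ, hγ, hAle⟩ := hA
  obtain ⟨C, hC⟩ := he
  have hC0 : 0 ≤ C := le_trans (l2norm_nonneg' (e 1)) (hC 1 le_rfl)
  set q : ℝ := max γ 0 with hqdef
  have hq0 : 0 ≤ q := le_max_right _ _
  have hq1 : q < 1 := max_lt hγ one_pos
  have hAq : l2OpNorm A ≤ q * Vu * Vub := by
    refine hAle.trans ?_
    have hγq : γ ≤ q := le_max_left _ _
    exact mul_le_mul_of_nonneg_right (mul_le_mul_of_nonneg_right hγq hVu.le) hVub.le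
  have hAbd : ∀ x : Fin n → ℝ, l2norm (A.mulVec x) ≤ q * Vu * Vub * l2norm x := fun x =>
    (l2OpNorm_bound A x).trans (mul_le_mul_of_nonneg_right hAq (l2norm_nonneg' x))
  have hVuVub : 0 < Vu * Vub := mul_pos hVu hVub
  -- the contraction map on Euclidean space
  let f : EuclideanSpace ℝ (Fin n) → EuclideanSpace ℝ (Fin n) :=
    fun x => toE (clamp1 ((1 / Vub) • ((1 / Vu) • A.mulVec x + g)))
  have hcontr : ∀ x y : EuclideanSpace ℝ (Fin n), dist (f x) (f y) ≤ q * dist x y := by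
    intro x y
    have hdxy : dist x y = l2norm ((x : Fin n → ℝ) - (y : Fin n → ℝ)) := dist_toE x y
    have hdf : dist (f x) (f y) =
        l2norm (clamp1 ((1 / Vub) • ((1 / Vu) • A.mulVec x + g))
          - clamp1 ((1 / Vub) • ((1 / Vu) • A.mulVec y + g))) := dist_toE _ _
    rw [hdf, hdxy]
    refine (clamp1_lip _ _).trans ?_
    have harg : ((1 / Vub) • ((1 / Vu) • A.mulVec x + g))
          - ((1 / Vub) • ((1 / Vu) • A.mulVec y + g))
        = (1 / Vub) • ((1 / Vu) • (A.mulVec ((x : Fin n → ℝ) - (y : Fin n → ℝ)))) := by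
      rw [Matrix.mulVec_sub]
      module
    rw [harg, l2norm_smul, l2norm_smul,
      abs_of_pos (by positivity : (0:ℝ) < 1 / Vub), abs_of_pos (by positivity : (0:ℝ) < 1 / Vu)]
    have h := hAbd ((x : Fin n → ℝ) - (y : Fin n → ℝ))
    have hn1 : (0:ℝ) ≤ l2norm ((x : Fin n → ℝ) - (y : Fin n → ℝ)) := l2norm_nonneg' _
    rw [div_mul_eq_mul_div, div_mul_eq_mul_div, one_mul, one_mul, div_div,
      div_le_iff₀ (by positivity)]
    calc l2norm (A.mulVec ((x : Fin n → ℝ) - (y : Fin n → ℝ)))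
        ≤ q * Vu * Vub * l2norm ((x : Fin n → ℝ) - (y : Fin n → ℝ)) := h
      _ = q * l2norm ((x : Fin n → ℝ) - (y : Fin n → ℝ)) * (Vu * Vub) := by ring
  have hlip : LipschitzWith ⟨q, hq0⟩ f := LipschitzWith.of_dist_le_mul hcontr
  have hK1 : (⟨q, hq0⟩ : NNReal) < 1 := by
    exact hq1
  have hcw : ContractingWith ⟨q, hq0⟩ f := ⟨hK1, hlip⟩
  let βstar : EuclideanSpace ℝ (Fin n) := ContractingWith.fixedPoint f hcw
  have hfix : f βstar = βstar := hcw.fixedPoint_isFixedPt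
  have hfixP : clamp1 ((1 / Vub) • ((1 / Vu) • A.mulVec (βstar : Fin n → ℝ) + g))
      = (βstar : Fin n → ℝ) := congrArg WithLp.ofLp hfix
  set bs : Fin n → ℝ := (βstar : Fin n → ℝ) with hbs
  set d : ℕ → ℝ := fun t => l2norm (β t - bs) with hd
  set M : ℝ := (1 / (Vu * Vub)) * l2norm (A.mulVec bs) + (1 / Vub) * C with hM
  have hrec : ∀ t, d (t + 1) ≤ q * d t + (1 / ((t : ℝ) + 1)) * M := by
    intro t
    have ht1 : (0:ℝ) < (t : ℝ) + 1 := by positivity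
    set r : ℝ := (t : ℝ) / ((t : ℝ) + 1) with hr
    have hr0 : 0 ≤ r := by positivity
    have hr1 : r ≤ 1 := by rw [hr, div_le_one ht1]; linarith
    have hr1' : 1 - r = 1 / ((t : ℝ) + 1) := by rw [hr]; field_simp; ring
    set uu : Fin n → ℝ := A.mulVec (β t - bs) with huu
    set w : Fin n → ℝ := A.mulVec bs with hw
    have hv : A.mulVec (β t) = uu + w := by
      rw [huu, hw, ← Matrix.mulVec_add, sub_add_cancel]
    set X : Fin n → ℝ := (1 / Vub) • (r • ((1 / Vu) • A.mulVec (β t)) + g) with hX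
    set Y : Fin n → ℝ := (1 / Vub) • ((1 / Vu) • A.mulVec bs + g) with hY
    have hsplit : β (t + 1) - bs =
        (clamp1 X - clamp1 Y) - (1 / Vub) • ((1 / ((t : ℝ) + 1)) • e (t + 1)) := by
      rw [hβ t, ← hfixP]
      abel
    have h1 : d (t + 1) ≤ l2norm (clamp1 X - clamp1 Y)
        + l2norm ((1 / Vub) • ((1 / ((t : ℝ) + 1)) • e (t + 1))) := by
      rw [hd]
      simp only []
      rw [hsplit]
      exact l2norm_sub_le _ _
    have h2 : l2norm (clamp1 X - clamp1 Y) ≤ l2norm (X - Y) := clamp1_lip _ _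
    have hXY : X - Y = (1 / Vub) • ((1 / Vu) • (r • uu + (r - 1) • w)) := by
      rw [hX, hY, hv]
      module
    have h3 : l2norm (X - Y) ≤ (1 / (Vu * Vub)) * (r * l2norm uu + (1 - r) * l2norm w) := by
      rw [hXY, l2norm_smul, l2norm_smul,
        abs_of_pos (by positivity : (0:ℝ) < 1 / Vub), abs_of_pos (by positivity : (0:ℝ) < 1 / Vu)]
      have hru : l2norm (r • uu + (r - 1) • w) ≤ r * l2norm uu + (1 - r) * l2norm w := by
        refine (l2norm_add_le _ _).trans ?_
        rw [l2norm_smul, l2norm_smul, abs_of_nonneg hr0,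
          abs_of_nonpos (by linarith : r - 1 ≤ 0)]
        have hrr : -(r - 1) = 1 - r := by ring
        rw [hrr]
      calc (1 / Vub) * ((1 / Vu) * l2norm (r • uu + (r - 1) • w))
          ≤ (1 / Vub) * ((1 / Vu) * (r * l2norm uu + (1 - r) * l2norm w)) := by
            have h1vu : (0:ℝ) ≤ 1 / Vu := by positivity
            have h1vub : (0:ℝ) ≤ 1 / Vub := by positivity
            exact mul_le_mul_of_nonneg_left (mul_le_mul_of_nonneg_left hru h1vu) h1vub
        _ = (1 / (Vu * Vub)) * (r * l2norm uu + (1 - r) * l2norm w) := by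
            ring
    have hubd : l2norm uu ≤ q * Vu * Vub * d t := hAbd (β t - bs)
    have h4 : l2norm ((1 / Vub) • ((1 / ((t : ℝ) + 1)) • e (t + 1)))
        ≤ (1 / ((t : ℝ) + 1)) * ((1 / Vub) * C) := by
      rw [l2norm_smul, l2norm_smul, abs_of_pos (by positivity : (0:ℝ) < 1 / Vub),
        abs_of_pos (by positivity : (0:ℝ) < 1 / ((t:ℝ)+1))]
      have hec : l2norm (e (t + 1)) ≤ C := hC (t + 1) (Nat.le_add_left 1 t)
      have h1t : (0:ℝ) ≤ 1 / ((t : ℝ) + 1) := by positivity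
      have h1vub : (0:ℝ) ≤ 1 / Vub := by positivity
      calc (1 / Vub) * ((1 / ((t:ℝ)+1)) * l2norm (e (t + 1)))
          ≤ (1 / Vub) * ((1 / ((t:ℝ)+1)) * C) :=
            mul_le_mul_of_nonneg_left (mul_le_mul_of_nonneg_left hec h1t) h1vub
        _ = (1 / ((t:ℝ)+1)) * ((1 / Vub) * C) := by ring
    have hru2 : (1 / (Vu * Vub)) * (r * l2norm uu + (1 - r) * l2norm w)
        ≤ q * d t + (1 / ((t : ℝ) + 1)) * ((1 / (Vu * Vub)) * l2norm w) := by
      have hun : (0:ℝ) ≤ l2norm uu := l2norm_nonneg' _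
      have hdt : (0:ℝ) ≤ d t := l2norm_nonneg' _
      have hru3 : r * l2norm uu ≤ q * Vu * Vub * d t := by
        have h5 := mul_le_mul_of_nonneg_left hubd hr0
        have hqd : (0:ℝ) ≤ q * Vu * Vub * d t := by positivity
        nlinarith
      rw [hr1']
      have hinv : (0:ℝ) < 1 / (Vu * Vub) := by positivity
      have hstep : (1 / (Vu * Vub)) * (r * l2norm uu) ≤ q * d t := by
        calc (1 / (Vu * Vub)) * (r * l2norm uu)
            ≤ (1 / (Vu * Vub)) * (q * Vu * Vub * d t) :=
              mul_le_mul_of_nonneg_left hru3 hinv.le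
          _ = q * d t := by field_simp
      have hsplit2 : (1 / (Vu * Vub)) * (r * l2norm uu + (1 / ((t:ℝ)+1)) * l2norm w)
          = (1 / (Vu * Vub)) * (r * l2norm uu)
            + (1 / ((t:ℝ)+1)) * ((1 / (Vu * Vub)) * l2norm w) := by ring
      rw [hsplit2]
      linarith
    have hwM : (1 / ((t:ℝ)+1)) * ((1 / (Vu * Vub)) * l2norm w)
        + (1 / ((t:ℝ)+1)) * ((1 / Vub) * C) = (1 / ((t:ℝ)+1)) * M := by
      rw [hM, hw]; ring
    linarith [h1, le_trans h2 h3]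
  have huM : Tendsto (fun t : ℕ => (1 / ((t : ℝ) + 1)) * M) atTop (𝓝 0) := by
    simpa using tendsto_one_div_add_atTop_nhds_zero_nat.mul_const M
  have hd0 : Tendsto d atTop (𝓝 0) :=
    decay_lemma q hq0 hq1 d _ (fun t => l2norm_nonneg' _) hrec huM
  have hconvE : Tendsto (fun t => toE (β t)) atTop (𝓝 (toE bs)) := by
    rw [tendsto_iff_norm_sub_tendsto_zero]
    have heq : (fun t => ‖toE (β t) - toE bs‖) = d := by
      funext t
      rw [← toE_sub, ← l2norm_eq_norm]
    rw [heq]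
    exact hd0
  refine ⟨bs, ?_, hfixP.symm⟩
  exact ((PiLp.continuous_ofLp 2 fun _ : Fin n => ℝ).tendsto (toE bs)).comp hconvE
end

section
/- Let n be a positive integer, A an n×n real matrix, g ∈ ℝ^n, and suppose β ∈ ℝ^n satisfies β = φ(A·β + g). If there exists λ < 1 such that ‖A‖_∞ ≤ λ and ‖g‖_∞ ≤ 1 − λ, then ‖β‖_∞ ≤ ‖g‖_∞/(1 − λ) ≤ 1 and ‖A·β + g‖_∞ ≤ 1, and consequently β = A·β + g. -/
/-- Sup norm `‖x‖_∞ = max_i |x_i|`. -/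
noncomputable def supNorm {n : ℕ} (x : Fin n → ℝ) : ℝ := ⨆ i, |x i|

/-- Operator norm of a matrix with respect to sup norms, `‖A‖_∞`. -/
noncomputable def supOpNorm {m n : ℕ} (A : Matrix (Fin m) (Fin n) ℝ) : ℝ :=
  sInf {c : ℝ | 0 ≤ c ∧ ∀ x : Fin n → ℝ, supNorm (A.mulVec x) ≤ c * supNorm x}

lemma supNorm_nonneg {n : ℕ} (x : Fin n → ℝ) : 0 ≤ supNorm x :=
  Real.iSup_nonneg fun i => abs_nonneg _

lemma abs_le_supNorm {n : ℕ} (x : Fin n → ℝ) (i : Fin n) : |x i| ≤ supNorm x :=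
  le_ciSup (f := fun j => |x j|) (Set.Finite.bddAbove (Set.finite_range _)) i

lemma supNorm_zero {n : ℕ} : supNorm (0 : Fin n → ℝ) = 0 := by
  refine le_antisymm ?_ (supNorm_nonneg _)
  exact Real.iSup_le (fun i => by simp) le_rfl

lemma supNorm_le {n : ℕ} {x : Fin n → ℝ} {c : ℝ} (h0 : 0 ≤ c) (h : ∀ i, |x i| ≤ c) :
    supNorm x ≤ c := Real.iSup_le h h0

lemma supNorm_add_le {n : ℕ} (x y : Fin n → ℝ) :
    supNorm (x + y) ≤ supNorm x + supNorm y := by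
  refine supNorm_le (add_nonneg (supNorm_nonneg x) (supNorm_nonneg y)) fun i => ?_
  calc |(x + y) i| ≤ |x i| + |y i| := abs_add_le _ _
    _ ≤ _ := add_le_add (abs_le_supNorm x i) (abs_le_supNorm y i)

lemma supOpNorm_mulVec_le {m n : ℕ} (A : Matrix (Fin m) (Fin n) ℝ) (x : Fin n → ℝ) :
    supNorm (A.mulVec x) ≤ supOpNorm A * supNorm x := by
  set S := {c : ℝ | 0 ≤ c ∧ ∀ x : Fin n → ℝ, supNorm (A.mulVec x) ≤ c * supNorm x} with hS
  have hC : (∑ i, ∑ j, |A i j|) ∈ S := by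
    constructor
    · positivity
    · intro y
      refine supNorm_le (mul_nonneg (by positivity) (supNorm_nonneg y)) fun i => ?_
      calc |A.mulVec y i| = |∑ j, A i j * y j| := by simp [Matrix.mulVec, dotProduct]
        _ ≤ ∑ j, |A i j * y j| := Finset.abs_sum_le_sum_abs _ _
        _ ≤ ∑ j, |A i j| * supNorm y := by
            refine Finset.sum_le_sum fun j _ => ?_
            rw [abs_mul]
            exact mul_le_mul_of_nonneg_left (abs_le_supNorm y j) (abs_nonneg _)
        _ = (∑ j, |A i j|) * supNorm y := by rw [Finset.sum_mul]
        _ ≤ (∑ i, ∑ j, |A i j|) * supNorm y := by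
            refine mul_le_mul_of_nonneg_right ?_ (supNorm_nonneg y)
            exact Finset.single_le_sum (f := fun i => ∑ j, |A i j|)
              (fun i _ => by positivity) (Finset.mem_univ i)
  have hne : S.Nonempty := ⟨_, hC⟩
  have hbd : BddBelow S := ⟨0, fun c hc => hc.1⟩
  rcases eq_or_lt_of_le (supNorm_nonneg x) with h0 | hpos
  · -- supNorm x = 0, so x = 0
    have hx : x = 0 := by
      funext i
      have := abs_le_supNorm x i
      rw [← h0] at this
      have := abs_nonpos_iff.mp this
      simpa using this
    rw [hx, Matrix.mulVec_zero, supNorm_zero]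
    exact mul_nonneg (Real.sInf_nonneg fun _ hc => hc.1) (supNorm_nonneg _)
  · refine le_of_forall_pos_le_add fun ε hε => ?_
    have hlt : sInf S < sInf S + ε / supNorm x := lt_add_of_pos_right _ (div_pos hε hpos)
    obtain ⟨c, hcS, hc⟩ := exists_lt_of_csInf_lt hne hlt
    calc supNorm (A.mulVec x) ≤ c * supNorm x := hcS.2 x
      _ ≤ (sInf S + ε / supNorm x) * supNorm x :=
          mul_le_mul_of_nonneg_right hc.le (supNorm_nonneg x)
      _ = sInf S * supNorm x + ε := by field_simp
  
lemma supOpNorm_nonneg {m n : ℕ} (A : Matrix (Fin m) (Fin n) ℝ) : 0 ≤ supOpNorm A :=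
  Real.sInf_nonneg fun _ hc => hc.1

/-- ∞-norm fixed-point bound: if `β = φ(Aβ + g)`, `‖A‖_∞ ≤ λ < 1` and `‖g‖_∞ ≤ 1 − λ`, then
`‖β‖_∞ ≤ ‖g‖_∞/(1 − λ) ≤ 1`, `‖Aβ + g‖_∞ ≤ 1`, and the clamp is inactive: `β = Aβ + g`. -/
theorem stmt9 (n : ℕ) (hn : 0 < n) (A : Matrix (Fin n) (Fin n) ℝ) (g : Fin n → ℝ)
    (β : Fin n → ℝ) (hβ : β = clamp1 (A.mulVec β + g))
    (lam : ℝ) (hlam : lam < 1) (hA : supOpNorm A ≤ lam) (hg : supNorm g ≤ 1 - lam) :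
    supNorm β ≤ supNorm g / (1 - lam) ∧ supNorm g / (1 - lam) ≤ 1 ∧
      supNorm (A.mulVec β + g) ≤ 1 ∧ β = A.mulVec β + g := by
  have hlam0 : 0 ≤ lam := le_trans (supOpNorm_nonneg A) hA
  have h1l : 0 < 1 - lam := by linarith
  have hβ1 : supNorm β ≤ 1 := by
    refine supNorm_le zero_le_one fun i => ?_
    rw [hβ]
    simp only [clamp1]
    rw [abs_le]
    constructor
    · exact le_min (by norm_num) (le_max_left _ _)
    · exact min_le_left _ _
  have hAβ : supNorm (A.mulVec β) ≤ lam * supNorm β :=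
    le_trans (supOpNorm_mulVec_le A β)
      (mul_le_mul_of_nonneg_right hA (supNorm_nonneg β))
  have hsum : supNorm (A.mulVec β + g) ≤ 1 := by
    calc supNorm (A.mulVec β + g) ≤ supNorm (A.mulVec β) + supNorm g := supNorm_add_le _ _
      _ ≤ lam * supNorm β + (1 - lam) := add_le_add hAβ hg
      _ ≤ lam * 1 + (1 - lam) := by nlinarith
      _ = 1 := by ring
  have heq : β = A.mulVec β + g := by
    funext i
    conv_lhs => rw [hβ]
    have h := abs_le.mp (le_trans (abs_le_supNorm (A.mulVec β + g) i) hsum)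
    simp only [clamp1]
    rw [max_eq_right h.1, min_eq_right h.2]
  have hβle : supNorm β ≤ supNorm g / (1 - lam) := by
    rw [le_div_iff₀ h1l]
    have : supNorm β ≤ lam * supNorm β + supNorm g := by
      calc supNorm β = supNorm (A.mulVec β + g) := by rw [← heq]
        _ ≤ supNorm (A.mulVec β) + supNorm g := supNorm_add_le _ _
        _ ≤ _ := add_le_add hAβ le_rfl
    nlinarith
  exact ⟨hβle, (div_le_one h1l).mpr hg, hsum, heq⟩
end

section
/- Let V_th > 0 and u_reset ∈ ℝ with V_th − u_reset > 0, and let (x[t])_{t≥1} be any sequence of real inputs. Define the ternary neuron dynamics: u[0] = 0, and for t ≥ 0, v[t+1] = u[t] + x[t+1], s[t+1] = 1 if v[t+1] > V_th, s[t+1] = −1 if v[t+1] < −V_th, s[t+1] = 0 otherwise, u[t+1] = v[t+1] − (V_th − u_reset)·s[t+1]. Define the coupled-neuron dynamics: u_1[0] = u_2[0] = 0, and for t ≥ 0, v_1[t+1] = u_1[t] + x[t+1], v_2[t+1] = u_2[t] − x[t+1], s_1[t+1] = 1 if v_1[t+1] > V_th and 0 otherwise, s_2[t+1] = 1 if v_2[t+1]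 > V_th and 0 otherwise, u_1[t+1] = v_1[t+1] − (V_th − u_reset)·(s_1[t+1] − s_2[t+1]), u_2[t+1] = v_2[t+1] − (V_th − u_reset)·(s_2[t+1] − s_1[t+1]). Then for all t ≥ 0: u_2[t] = −u_1[t], s_1[t]·s_2[t] = 0 (the two neurons never fire simultaneously), u_1[t] = u[t], and s_1[t] − s_2[t] = s[t]. -/
/-- A ternary spiking neuron (symmetric thresholds `±V_th`, output in `{−1, 0, 1}`,
subtraction reset with gap `V_th − u_reset`) is exactly realized by two coupled common
integrate-and-fire neurons receiving opposite inputs, each of whose spikes also resets the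
other: the membrane potentials agree (`u₁ = u`, `u₂ = −u₁`), the two neurons never fire
simultaneously, and the couple's output `s₁ − s₂` equals the ternary output `s`. -/
theorem stmt17 (Vth ureset : ℝ) (hVth : 0 < Vth) (hgap : 0 < Vth - ureset)
    (x : ℕ → ℝ)
    (u v s : ℕ → ℝ)
    (hu0 : u 0 = 0) (hs0 : s 0 = 0)
    (hv : ∀ t : ℕ, v (t + 1) = u t + x (t + 1))
    (hs : ∀ t : ℕ, s (t + 1) =
      if Vth < v (t + 1) then (1 : ℝ) else if v (t + 1) < -Vth then -1 else 0)
    (hu : ∀ t : ℕ, u (t + 1) = v (t + 1) - (Vth - ureset) * s (t + 1))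
    (u1 u2 v1 v2 s1 s2 : ℕ → ℝ)
    (hu10 : u1 0 = 0) (hu20 : u2 0 = 0) (hs10 : s1 0 = 0) (hs20 : s2 0 = 0)
    (hv1 : ∀ t : ℕ, v1 (t + 1) = u1 t + x (t + 1))
    (hv2 : ∀ t : ℕ, v2 (t + 1) = u2 t - x (t + 1))
    (hs1 : ∀ t : ℕ, s1 (t + 1) = if Vth < v1 (t + 1) then (1 : ℝ) else 0)
    (hs2 : ∀ t : ℕ, s2 (t + 1) = if Vth < v2 (t + 1) then (1 : ℝ) else 0)
    (hu1 : ∀ t : ℕ, u1 (t + 1) = v1 (t + 1) - (Vth - ureset) * (s1 (t + 1) - s2 (t + 1)))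
    (hu2 : ∀ t : ℕ, u2 (t + 1) = v2 (t + 1) - (Vth - ureset) * (s2 (t + 1) - s1 (t + 1))) :
    ∀ t : ℕ, u2 t = -u1 t ∧ s1 t * s2 t = 0 ∧ u1 t = u t ∧ s1 t - s2 t = s t := by
  intro t
  induction t with
  | zero => simp [hu0, hs0, hu10, hu20, hs10, hs20]
  | succ t ih =>
    obtain ⟨h2, _, h1, _⟩ := ih
    have hv1v : v1 (t+1) = v (t+1) := by rw [hv1, hv, h1]
    have hv2v : v2 (t+1) = -v (t+1) := by rw [hv2, hv, h2, h1]; ring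
    have key : s1 (t+1) * s2 (t+1) = 0 ∧ s1 (t+1) - s2 (t+1) = s (t+1) := by
      rw [hs1, hs2, hs, hv1v, hv2v]
      rcases lt_trichotomy Vth (v (t+1)) with h | h | h
      · have : ¬ Vth < -v (t+1) := by linarith
        simp [h, this]
      · have h1' : ¬ Vth < v (t+1) := by linarith
        have h2' : ¬ Vth < -v (t+1) := by linarith
        have h3' : ¬ v (t+1) < -Vth := by linarith
        simp [h1', h2', h3']
      · rcases lt_or_ge (v (t+1)) (-Vth) with h' | h'
        · have hg : Vth < -v (t+1) := by linarith
          have : ¬ Vth < v (t+1) := by linarith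
          simp [hg, this, h']
        · have h1' : ¬ Vth < v (t+1) := by linarith
          have h2' : ¬ Vth < -v (t+1) := by linarith
          have h3' : ¬ v (t+1) < -Vth := by linarith
          simp [h1', h2', h3']
    refine ⟨?_, key.1, ?_, key.2⟩
    · rw [hu2, hu1, hv1v, hv2v]; ring
    · rw [hu1, hu, hv1v, key.2]
end
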